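/- arXiv:math/9501204 — 3 statements merged into one kernel-verified Lean document; each statement's English description precedes it below -/
import Mathlib

section
/- If B is a natural member of 𝕊(m,n) and W ⊆ B is a dense G_δ relative to B, then W ∈ 𝕊(m,n); that is, W also admits a witnessing family of open balls as in the definition of 𝕊(m,n). -/
open Set

noncomputable section

abbrev Euc (m : ℕ) := EuclideanSpace ℝ (Fin m)

/-- Angle between the lines spanned by `v` and `w`. -/
noncomputable def lineAngle {E : Type*} [NormedAddCommGroup E] [InnerProductSpace ℝ E]
    (v w : E) : ℝ :=
  min (InnerProductGeometry.angle v w) (InnerProductGeometry.angle v (-w))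

/-- Angular distance from the line spanned by `v` to the subspace `V`. -/
noncomputable def angleToSub {E : Type*} [NormedAddCommGroup E] [InnerProductSpace ℝ E]
    (v : E) (V : Submodule ℝ E) : ℝ :=
  sInf (lineAngle v '' {w : E | w ∈ V ∧ w ≠ 0})

/-- `V` is a `k`-dimensional tangent plane to `A` at `b`. -/
def IsTangentPlane {E : Type*} [NormedAddCommGroup E] [InnerProductSpace ℝ E]
    (k : ℕ) (A : Set E) (b : E) (V : Submodule ℝ E) : Prop :=
  Module.finrank ℝ V ≤ k ∧
    ∀ ε > (0:ℝ), ∃ δ > (0:ℝ), ∀ a ∈ A, 0 < ‖a - b‖ → ‖a - b‖ < δ → angleToSub (a - b) V < ε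

/-- `A` is a `k`-smooth surface. -/
def IsSmoothSurface {E : Type*} [NormedAddCommGroup E] [InnerProductSpace ℝ E]
    (k : ℕ) (A : Set E) : Prop :=
  ∀ b ∈ A, ∃ V, IsTangentPlane k A b V

/-- `ε`-orthogonality of an indexed family `{x_i}_{i=0}^n`. -/
def EpsOrthogonal {E : Type*} [NormedAddCommGroup E] [InnerProductSpace ℝ E]
    (ε : ℝ) {n : ℕ} (x : Fin (n + 1) → E) : Prop :=
  ∀ i j : Fin (n + 1), i ≠ 0 → j ≠ 0 → i ≠ j →
    |lineAngle (x i - x 0) (x j - x 0) - Real.pi / 2| < ε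

/-- `ε` has the separation property of the constant `ε(m)`. -/
def SepConst (m : ℕ) (ε : ℝ) : Prop :=
  0 < ε ∧ ∀ (n : ℕ) (x : Fin (n + 1) → Euc m) (V : Submodule ℝ (Euc m)),
    EpsOrthogonal ε x → Module.finrank ℝ V < n →
      ∃ i : Fin (n + 1), i ≠ 0 ∧ ε < angleToSub (x i - x 0) V

/-- `C` is a witness that `B ∈ 𝕊(m,n)` (with orthogonality constant `ε`). -/
def SacksWitness (m n : ℕ) (ε : ℝ) (C : List (Fin (n + 1)) → Set (Euc m))
    (B : Set (Euc m)) : Prop :=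
  (∀ ξ, ∃ c r, 0 < r ∧ (ξ ≠ [] → r < 1 / (ξ.length : ℝ)) ∧ C ξ = Metric.ball c r) ∧
  (⋂ i : ℕ, ⋃ ξ ∈ {l : List (Fin (n + 1)) | l.length = i}, closure (C ξ)) ⊆ B ∧
  (∀ ξ ξ', ξ.length = ξ'.length → ξ ≠ ξ' → closure (C ξ) ∩ closure (C ξ') = ∅) ∧
  (∀ ξ ξ' : List (Fin (n + 1)), ξ' <+: ξ → ξ' ≠ ξ → closure (C ξ) ⊆ C ξ') ∧
  (∀ ξ (x : Fin (n + 1) → Euc m), (∀ k, x k ∈ C (ξ ++ [k])) → EpsOrthogonal ε x)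

/-- Membership in the forcing `𝕊(m,n)`. -/
def InSacks (m n : ℕ) (ε : ℝ) (B : Set (Euc m)) : Prop :=
  MeasurableSet B ∧ ∃ C, SacksWitness m n ε C B

/-- `B` is a natural member of `𝕊(m,n)`. -/
def NaturalSacks (m n : ℕ) (ε : ℝ) (B : Set (Euc m)) : Prop :=
  ∃ C, SacksWitness m n ε C B ∧
    B = ⋂ i : ℕ, ⋃ ξ ∈ {l : List (Fin (n + 1)) | l.length = i}, C ξ

/-- A discrete subset of `ℝ^m`. -/
def DiscreteSet {m : ℕ} (S : Set (Euc m)) : Prop :=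
  ∀ x ∈ S, ∃ U, IsOpen U ∧ U ∩ S = {x}

/-- Membership in the σ-ideal `𝒟_{m,k}` (generated by discrete sets when `k = 0`). -/
def InIdeal (m k : ℕ) (S : Set (Euc m)) : Prop :=
  ∃ T : ℕ → Set (Euc m),
    (∀ j, if k = 0 then DiscreteSet (T j) else IsSmoothSurface k (T j)) ∧ S ⊆ ⋃ j, T j

/-- The covering number `𝔡_{m,k}` of the σ-ideal `𝒟_{m,k}`. -/
def covIdeal (m k : ℕ) : Cardinal :=
  sInf {κ | ∃ (ι : Type) (S : ι → Set (Euc m)), Cardinal.mk ι = κ ∧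
    (∀ i, InIdeal m k (S i)) ∧ (⋃ i, S i) = Set.univ}

/-- The covering number of the meagre ideal on `ℝ^m`. -/
def covMeagre (m : ℕ) : Cardinal :=
  sInf {κ | ∃ (ι : Type) (S : ι → Set (Euc m)), Cardinal.mk ι = κ ∧
    (∀ i, IsMeagre (S i)) ∧ (⋃ i, S i) = Set.univ}

/-- `g` is differentiable on its domain `X`. -/
def DiffOnDomain (g : ℝ → ℝ) (X : Set ℝ) : Prop :=
  ∀ x ∈ X, ∃ μ : ℝ,
    Filter.Tendsto (fun t => (g t - g x) / (t - x)) (nhdsWithin x (X \ {x})) (nhds μ)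

/-- The point `(x, y)` of the Euclidean plane. -/
def pt (x y : ℝ) : Euc 2 := WithLp.toLp 2 ![x, y]

/-- `dec(𝒞,𝒟)`. -/
def decCD : Cardinal :=
  sInf {κ | ∃ ι : Type, Cardinal.mk ι = κ ∧ ∀ f : ℝ → ℝ, Continuous f →
    ∃ X : ι → Set ℝ, (⋃ i, X i) = Set.univ ∧ ∀ i, DiffOnDomain f (X i)}

/-- `cov(𝒟_{2,1})` via coverings by 1-smooth curves. -/
def cov21 : Cardinal :=
  sInf {κ | ∃ (ι : Type) (S : ι → Set (Euc 2)), Cardinal.mk ι = κ ∧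
    (∀ i, IsSmoothSurface 1 (S i)) ∧ (⋃ i, S i) = Set.univ}


section AuxSacks

open Metric

variable {m n : ℕ} {ε : ℝ} {C : List (Fin (n + 1)) → Set (Euc m)} {B : Set (Euc m)}

/-- Split two distinct lists of the same length at their first disagreement. -/
lemma aux_list_split {α : Type*} : ∀ (ξ ξ' : List α), ξ.length = ξ'.length → ξ ≠ ξ' →
    ∃ ρ a b, a ≠ b ∧ ρ ++ [a] <+: ξ ∧ ρ ++ [b] <+: ξ' := by
  intro ξ
  induction ξ with
  | nil => intro ξ' h hne; cases ξ' <;> simp_all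
  | cons x t ih =>
    intro ξ' h hne
    cases ξ' with
    | nil => simp at h
    | cons x' t' =>
      by_cases hx : x = x'
      · subst hx
        have ht : t ≠ t' := fun h' => hne (by rw [h'])
        obtain ⟨ρ, a, b, hab, h1, h2⟩ := ih t' (by simpa using h) ht
        refine ⟨x :: ρ, a, b, hab, ?_, ?_⟩
        · rw [List.cons_append]; exact List.cons_prefix_cons.mpr ⟨rfl, h1⟩
        · rw [List.cons_append]; exact List.cons_prefix_cons.mpr ⟨rfl, h2⟩
      · exact ⟨[], x, x', hx, ⟨t, rfl⟩, ⟨t', rfl⟩⟩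

lemma aux_prefix_concat {α : Type*} {l t : List α} {k : α} (h : l <+: t ++ [k]) :
    l = t ++ [k] ∨ l <+: t := by
  by_cases hl : l.length ≤ t.length
  · right
    have := List.prefix_iff_eq_take.mp h
    rw [List.take_append_of_le_length hl] at this
    rw [this]; exact List.take_prefix _ _
  · left
    have hle := h.length_le
    simp only [List.length_append, List.length_singleton] at hle
    exact h.eq_of_length (by simp; omega)

lemma aux_cl_mono (hC : SacksWitness m n ε C B) {η' η : List (Fin (n + 1))}
    (h : η' <+: η) : closure (C η) ⊆ closure (C η') := by
  rcases eq_or_ne η' η with rfl | hne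
  · exact subset_rfl
  · exact (hC.2.2.2.1 η η' h hne).trans subset_closure

lemma aux_eq_of_mem (hC : SacksWitness m n ε C B) {ξ ξ' : List (Fin (n + 1))} {y : Euc m}
    (hlen : ξ.length = ξ'.length) (h1 : y ∈ closure (C ξ)) (h2 : y ∈ closure (C ξ')) :
    ξ = ξ' := by
  by_contra hne
  have := hC.2.2.1 ξ ξ' hlen hne
  exact absurd (this ▸ ⟨h1, h2⟩ : y ∈ (∅ : Set (Euc m))) (Set.notMem_empty y)

lemma aux_ball_props (hC : SacksWitness m n ε C B) (ξ : List (Fin (n + 1))) :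
    IsOpen (C ξ) ∧ (C ξ).Nonempty ∧ IsCompact (closure (C ξ)) := by
  obtain ⟨c, r, hr, -, heq⟩ := hC.1 ξ
  refine ⟨heq ▸ isOpen_ball, heq ▸ nonempty_ball.mpr hr, ?_⟩
  rw [heq]
  exact Metric.isCompact_of_isClosed_isBounded isClosed_closure isBounded_ball.closure

/-- Every node of the witness tree meets `B`. -/
lemma aux_nonempty (hC : SacksWitness m n ε C B) (η : List (Fin (n + 1))) :
    ∃ x, x ∈ B ∧ x ∈ C η := by
  set K : ℕ → Set (Euc m) := fun j => closure (C (η ++ List.replicate (j + 1) 0)) with hK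
  have hpre : ∀ j : ℕ, (η ++ List.replicate (j + 1) 0) <+: (η ++ List.replicate (j + 2) 0) := by
    intro j
    refine ⟨[0], ?_⟩
    rw [List.append_assoc]
    congr 1
    rw [← List.replicate_succ']
  have hsub : ∀ j, K (j + 1) ⊆ K j := by
    intro j
    have hne : (η ++ List.replicate (j + 1) 0) ≠ (η ++ List.replicate (j + 2) 0) := by
      intro h; have := congrArg List.length h; simp at this
    exact (hC.2.2.2.1 _ _ (hpre j) hne).trans subset_closure
  have hKne : ∀ j, (K j).Nonempty := fun j => ((aux_ball_props hC _).2.1).closure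
  have hKcl : ∀ j, IsClosed (K j) := fun j => isClosed_closure
  have hKcp : IsCompact (K 0) := (aux_ball_props hC _).2.2
  obtain ⟨x, hx⟩ := IsCompact.nonempty_iInter_of_sequence_nonempty_isCompact_isClosed
    K hsub hKne hKcp hKcl
  have hxK : ∀ j, x ∈ K j := fun j => Set.mem_iInter.mp hx j
  have hxB : x ∈ B := by
    apply hC.2.1
    refine Set.mem_iInter.mpr fun i => ?_
    have hmem : (η ++ List.replicate (i + 1) 0).take i ∈ {l : List (Fin (n+1)) | l.length = i} := by
      simp; omega
    refine Set.mem_biUnion hmem ?_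
    have hpre' : (η ++ List.replicate (i + 1) 0).take i <+: (η ++ List.replicate (i + 1) 0) :=
      List.take_prefix _ _
    exact aux_cl_mono hC hpre' (hxK i)
  refine ⟨x, hxB, ?_⟩
  have hpre0 : η <+: η ++ List.replicate 1 0 := ⟨List.replicate 1 0, rfl⟩
  have hne0 : η ≠ η ++ List.replicate 1 0 := by
    intro h; have := congrArg List.length h; simp at this
  exact hC.2.2.2.1 _ _ hpre0 hne0 (hxK 0)

end AuxSacks

theorem dense_Gdelta_in_natural {m n : ℕ} (ε : ℝ) (hε : SepConst m ε)
    (B W : Set (Euc m)) (hB : NaturalSacks m n ε B) (hWB : W ⊆ B)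
    (hGd : IsGδ (Subtype.val ⁻¹' W : Set B)) (hdense : Dense (Subtype.val ⁻¹' W : Set B)) :
    InSacks m n ε W := by
  classical
  obtain ⟨C, hC, hBeq⟩ := hB
  choose c r hr hrlt hCeq using hC.1
  have hCopen : ∀ ζ, IsOpen (C ζ) := fun ζ => (aux_ball_props hC ζ).1
  -- branch through open sets, from naturality
  have hbranch : ∀ y ∈ B, ∀ i, ∃ ξ : List (Fin (n + 1)), ξ.length = i ∧ y ∈ C ξ := by
    intro y hy i
    rw [hBeq] at hy
    have := Set.mem_iInter.mp hy i
    simpa using this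
  -- the Gδ structure
  obtain ⟨V, hVopen, hVeq⟩ := hGd.eq_iInter_nat
  choose G hGopen hGpre using fun k => isOpen_induced_iff.mp (hVopen k)
  have hWeq : W = B ∩ ⋂ k, G k := by
    ext x
    constructor
    · intro hx
      have hxB : x ∈ B := hWB hx
      refine ⟨hxB, Set.mem_iInter.mpr fun k => ?_⟩
      have hxV : (⟨x, hxB⟩ : B) ∈ ⋂ k, V k := by rw [← hVeq]; exact hx
      have := Set.mem_iInter.mp hxV k
      rw [← hGpre k] at this
      exact this
    · rintro ⟨hxB, hxG⟩
      have : (⟨x, hxB⟩ : B) ∈ ⋂ k, V k := Set.mem_iInter.mpr fun k => by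
        rw [← hGpre k]; exact Set.mem_iInter.mp hxG k
      rw [← hVeq] at this
      exact this
  have hWdense : ∀ U : Set (Euc m), IsOpen U → (U ∩ B).Nonempty → ∃ y, y ∈ U ∧ y ∈ W := by
    rintro U hU ⟨z, hzU, hzB⟩
    have hUo : IsOpen (Subtype.val ⁻¹' U : Set B) := hU.preimage continuous_subtype_val
    obtain ⟨b, hbU, hbW⟩ := hdense.inter_open_nonempty _ hUo ⟨⟨z, hzB⟩, hzU⟩
    exact ⟨b.1, hbU, hbW⟩
  -- key extension lemma
  have hext : ∀ (η : List (Fin (n + 1))) (j : ℕ), ∃ η', η <+: η' ∧ η ≠ η' ∧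
      closure (C η') ⊆ C η ∧ closure (C η') ⊆ G j := by
    intro η j
    obtain ⟨x0, hx0B, hx0C⟩ := aux_nonempty hC η
    obtain ⟨y, hyC, hyW⟩ := hWdense (C η) (hCopen η) ⟨x0, hx0C, hx0B⟩
    have hyB : y ∈ B := hWB hyW
    choose ζ hζlen hζmem using hbranch y hyB
    have huniq : ∀ ξ : List (Fin (n + 1)), y ∈ C ξ → ξ = ζ ξ.length := fun ξ hξ =>
      aux_eq_of_mem hC (by rw [hζlen]) (subset_closure hξ) (subset_closure (hζmem _))
    have hchain : ∀ i j : ℕ, i < j → ζ i = (ζ j).take i := by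
      intro i j hij
      have hlt : ((ζ j).take i).length = i := by
        simp [List.length_take, hζlen j]; omega
      have hnej : (ζ j).take i ≠ ζ j := by
        intro h
        have := congrArg List.length h
        rw [hlt, hζlen j] at this
        omega
      have h1 : y ∈ C ((ζ j).take i) :=
        hC.2.2.2.1 (ζ j) _ (List.take_prefix _ _) hnej (subset_closure (hζmem j))
      have h2 := huniq _ h1
      rw [hlt] at h2
      exact h2.symm
    have hηζ : η = ζ η.length := huniq η hyC
    rw [hWeq] at hyW
    have hyG : y ∈ G j := Set.mem_iInter.mp hyW.2 j
    obtain ⟨δ, hδ, hδsub⟩ := Metric.isOpen_iff.mp (hGopen j) y hyG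
    set N : ℕ := max (η.length + 1) (⌈2 / δ⌉₊ + 1) with hN
    have hNη : η.length < N := lt_of_lt_of_le (Nat.lt_succ_self _) (le_max_left _ _)
    have hN1 : 1 ≤ N := le_trans (by omega) (le_max_left _ _)
    have hNpos : (0 : ℝ) < N := by exact_mod_cast hN1
    have hNδ : 2 / δ < (N : ℝ) := by
      have h1 : (2 / δ) ≤ (⌈2 / δ⌉₊ : ℝ) := Nat.le_ceil _
      have h2 : (⌈2 / δ⌉₊ : ℝ) < N := by
        have h3 : ⌈2 / δ⌉₊ < N := lt_of_lt_of_le (Nat.lt_succ_self _) (le_max_right _ _)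
        exact_mod_cast h3
      linarith
    have h2N : 2 / (N : ℝ) < δ := by
      have h3 : 2 < (N : ℝ) * δ := by
        have h4 := (div_lt_iff₀ hδ).mp hNδ
        linarith
      rw [div_lt_iff₀ hNpos]
      linarith
    have hζNne : ζ N ≠ [] := by
      intro h
      have h1 := hζlen N
      rw [h] at h1
      simp at h1
      omega
    have hrN : r (ζ N) < 1 / (N : ℝ) := by
      have h1 := hrlt (ζ N) hζNne
      rwa [hζlen N] at h1
    have hζNsub : C (ζ N) ⊆ Metric.ball y δ := by
      intro z hz
      have hy' : y ∈ C (ζ N) := hζmem N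
      rw [hCeq (ζ N)] at hz hy'
      rw [Metric.mem_ball] at hz hy' ⊢
      have hdist : dist z y ≤ dist z (c (ζ N)) + dist y (c (ζ N)) := by
        rw [dist_comm y (c (ζ N))]
        exact dist_triangle _ _ _
      have h4 : (2 : ℝ) * r (ζ N) < 2 / N := by
        rw [div_eq_mul_inv, ← one_div]
        linarith
      linarith
    have hballG : Metric.ball y δ ⊆ G j := hδsub
    have hc1 := hchain η.length (N + 1) (by omega)
    have hpreη : η <+: ζ (N + 1) := by
      rw [hηζ, hc1]
      exact List.take_prefix _ _
    have hneη : η ≠ ζ (N + 1) := by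
      intro h
      have h1 := congrArg List.length h
      rw [hζlen (N + 1)] at h1
      omega
    have hc2 := hchain N (N + 1) (by omega)
    have hpreN : ζ N <+: ζ (N + 1) := by
      rw [hc2]
      exact List.take_prefix _ _
    have hneN : ζ N ≠ ζ (N + 1) := by
      intro h
      have h1 := congrArg List.length h
      rw [hζlen N, hζlen (N + 1)] at h1
      omega
    refine ⟨ζ (N + 1), hpreη, hneη, hC.2.2.2.1 _ _ hpreη hneη, ?_⟩
    exact (hC.2.2.2.1 _ _ hpreN hneN).trans (hζNsub.trans hballG)
  -- choose the extension function and build the fused witness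
  choose E hE1 hE2 hE3 hE4 using hext
  let sig : List (Fin (n + 1)) → List (Fin (n + 1)) := fun ξ =>
    List.rec (E [] 0) (fun k t ih => E (ih ++ [k]) (t.length + 1)) ξ.reverse
  have hsig_app : ∀ (ξ : List (Fin (n + 1))) (k : Fin (n + 1)),
      sig (ξ ++ [k]) = E (sig ξ ++ [k]) (ξ.length + 1) := by
    intro ξ k
    have h1 : sig (ξ ++ [k]) = E (sig ξ ++ [k]) (ξ.reverse.length + 1) := by
      show (List.rec (E [] 0) (fun k t ih => E (ih ++ [k]) (t.length + 1))
        ((ξ ++ [k]).reverse) : List (Fin (n + 1))) = _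
      rw [List.reverse_append, List.reverse_singleton, List.singleton_append]
    rwa [List.length_reverse] at h1
  have hsig_len : ∀ ξ : List (Fin (n + 1)), ξ.length ≤ (sig ξ).length := by
    intro ξ
    induction ξ using List.reverseRecOn with
    | nil => simp
    | append_singleton t k ih =>
      rw [hsig_app]
      have h1 : (sig t ++ [k]).length ≤ (E (sig t ++ [k]) (t.length + 1)).length :=
        (hE1 _ _).length_le
      simp only [List.length_append, List.length_singleton] at h1 ⊢
      omega
  have hsig_G : ∀ ξ : List (Fin (n + 1)), closure (C (sig ξ)) ⊆ G ξ.length := by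
    intro ξ
    induction ξ using List.reverseRecOn with
    | nil => exact hE4 [] 0
    | append_singleton t k ih =>
      rw [hsig_app]
      simpa using hE4 (sig t ++ [k]) (t.length + 1)
  have hstep_pre : ∀ (t : List (Fin (n + 1))) (k), sig t ++ [k] <+: sig (t ++ [k]) := by
    intro t k; rw [hsig_app]; exact hE1 _ _
  have hstep_cl : ∀ (t : List (Fin (n + 1))) (k),
      closure (C (sig (t ++ [k]))) ⊆ C (sig t ++ [k]) := by
    intro t k; rw [hsig_app]; exact hE3 _ _
  have hstep_lt : ∀ (t : List (Fin (n + 1))) (k),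
      (sig t).length < (sig (t ++ [k])).length := by
    intro t k
    have h1 := (hstep_pre t k).length_le
    simp only [List.length_append, List.length_singleton] at h1
    omega
  have hmono : ∀ ξ ξ' : List (Fin (n + 1)), ξ' <+: ξ → ξ' ≠ ξ →
      sig ξ' <+: sig ξ ∧ (sig ξ').length < (sig ξ).length := by
    intro ξ
    induction ξ using List.reverseRecOn with
    | nil => intro ξ' h hne; exact absurd (List.prefix_nil.mp h) hne
    | append_singleton t k ih =>
      intro ξ' h hne
      have hstep' : sig t <+: sig (t ++ [k]) :=
        (List.prefix_append (sig t) [k]).trans (hstep_pre t k)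
      rcases aux_prefix_concat h with rfl | h'
      · exact absurd rfl hne
      · rcases eq_or_ne ξ' t with heq | hne'
        · rw [heq]; exact ⟨hstep', hstep_lt t k⟩
        · obtain ⟨h1, h2⟩ := ih ξ' h' hne'
          exact ⟨h1.trans hstep', lt_trans h2 (hstep_lt t k)⟩
  have hsplit_cl : ∀ (ρ : List (Fin (n + 1))) (a : Fin (n + 1)) (ξ : List (Fin (n + 1))),
      ρ ++ [a] <+: ξ → closure (C (sig ξ)) ⊆ closure (C (sig ρ ++ [a])) := by
    intro ρ a ξ h
    rcases eq_or_ne (ρ ++ [a]) ξ with rfl | hne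
    · exact (hstep_cl ρ a).trans subset_closure
    · have h1 := (hmono ξ (ρ ++ [a]) h hne).1
      exact (aux_cl_mono hC h1).trans ((hstep_cl ρ a).trans subset_closure)
  refine ⟨?_, fun ξ => C (sig ξ), ?_, ?_, ?_, ?_, ?_⟩
  · -- measurability
    rw [hWeq]
    apply MeasurableSet.inter
    · rw [hBeq]
      exact MeasurableSet.iInter fun i =>
        MeasurableSet.biUnion (Set.to_countable _) fun ξ _ => (hCopen ξ).measurableSet
    · exact MeasurableSet.iInter fun k => (hGopen k).measurableSet
  · -- balls
    intro ξ
    refine ⟨c (sig ξ), r (sig ξ), hr _, ?_, hCeq _⟩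
    intro hne
    have hξpos : 0 < ξ.length := List.length_pos_iff.mpr hne
    have h3 : ξ.length ≤ (sig ξ).length := hsig_len ξ
    have h1 : sig ξ ≠ [] := by
      intro h
      rw [h] at h3
      simp only [List.length_nil, Nat.le_zero] at h3
      exact hne (List.length_eq_zero_iff.mp h3)
    have h2 := hrlt (sig ξ) h1
    have h4 : (1 : ℝ) / (sig ξ).length ≤ 1 / ξ.length := by
      apply one_div_le_one_div_of_le
      · exact_mod_cast hξpos
      · exact_mod_cast h3
    linarith
  · -- kernel inside W
    intro x hx
    have hx' : ∀ i, ∃ ξ : List (Fin (n + 1)), ξ.length = i ∧ x ∈ closure (C (sig ξ)) := by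
      intro i
      have h1 := Set.mem_iInter.mp hx i
      simpa using h1
    choose Ξ hΞlen hΞmem using hx'
    rw [hWeq]
    constructor
    · rw [hBeq]
      refine Set.mem_iInter.mpr fun i => ?_
      have hA : i + 1 ≤ (sig (Ξ (i + 1))).length := by
        have h1 := hsig_len (Ξ (i + 1))
        rw [hΞlen (i + 1)] at h1
        exact h1
      have hpre : (sig (Ξ (i + 1))).take i <+: sig (Ξ (i + 1)) := List.take_prefix _ _
      have hneq : (sig (Ξ (i + 1))).take i ≠ sig (Ξ (i + 1)) := by
        intro h
        have h1 := congrArg List.length h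
        rw [List.length_take] at h1
        omega
      have hxin : x ∈ C ((sig (Ξ (i + 1))).take i) :=
        hC.2.2.2.1 _ _ hpre hneq (hΞmem (i + 1))
      have hmem' : (sig (Ξ (i + 1))).take i ∈ {l : List (Fin (n + 1)) | l.length = i} := by
        simp only [Set.mem_setOf_eq, List.length_take]
        omega
      exact Set.mem_biUnion hmem' hxin
    · refine Set.mem_iInter.mpr fun k => ?_
      have h1 := hsig_G (Ξ k) (hΞmem k)
      rwa [hΞlen k] at h1
  · -- disjointness
    intro ξ ξ' hlen hne
    obtain ⟨ρ, a, b, hab, h1, h2⟩ := aux_list_split ξ ξ' hlen hne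
    have hne2 : sig ρ ++ [a] ≠ sig ρ ++ [b] := by
      intro h
      exact hab (by simpa using List.append_cancel_left h)
    have hd := hC.2.2.1 (sig ρ ++ [a]) (sig ρ ++ [b]) (by simp) hne2
    apply Set.eq_empty_of_subset_empty
    intro z hz
    rw [← hd]
    exact ⟨hsplit_cl ρ a ξ h1 hz.1, hsplit_cl ρ b ξ' h2 hz.2⟩
  · -- nesting
    intro ξ ξ' hpre hne
    have h1 := hmono ξ ξ' hpre hne
    refine hC.2.2.2.1 (sig ξ) (sig ξ') h1.1 ?_
    intro h
    rw [h] at h1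
    exact lt_irrefl _ h1.2
  · -- orthogonality
    intro ξ x hx
    apply hC.2.2.2.2 (sig ξ) x
    intro k
    exact hstep_cl ξ k (subset_closure (hx k))

end
end

section
/- Let f : ℝ → ℝ be continuous and let S ⊆ ℝ² be a 1-smooth curve. Suppose x is a point such that (x, f(x)) ∈ S and the tangent line to S at (x, f(x)) has finite slope μ. Then the restriction of f to X = {t ∈ ℝ : (t, f(t)) ∈ S} is differentiable at x with derivative μ, i.e., lim_{t→x, t∈X, t≠x} (f(t) − f(x))/(t − x) = μ. -/
open Set

noncomputable section

lemma lineAngle_smul_right' {E : Type*} [NormedAddCommGroup E] [InnerProductSpace ℝ E]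
    (u v : E) {c : ℝ} (hc : c ≠ 0) : lineAngle u (c • v) = lineAngle u v := by
  rcases hc.lt_or_gt with h | h
  · unfold lineAngle
    rw [InnerProductGeometry.angle_smul_right_of_neg u v h, ← smul_neg,
      InnerProductGeometry.angle_smul_right_of_neg u (-v) h, neg_neg, min_comm]
  · unfold lineAngle
    rw [InnerProductGeometry.angle_smul_right_of_pos u v h, ← smul_neg,
      InnerProductGeometry.angle_smul_right_of_pos u (-v) h]

lemma angleToSub_span' {E : Type*} [NormedAddCommGroup E] [InnerProductSpace ℝ E]
    (u v : E) (hv : v ≠ 0) : angleToSub u (Submodule.span ℝ {v}) = lineAngle u v := by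
  have h : lineAngle u '' {w : E | w ∈ Submodule.span ℝ {v} ∧ w ≠ 0} = {lineAngle u v} := by
    apply Set.Subset.antisymm
    · rintro θ ⟨w, ⟨hw, hw0⟩, rfl⟩
      obtain ⟨c, rfl⟩ := Submodule.mem_span_singleton.mp hw
      have hc : c ≠ 0 := by rintro rfl; simp at hw0
      simp [lineAngle_smul_right' u v hc]
    · rintro θ rfl
      exact ⟨v, ⟨Submodule.mem_span_singleton_self v, hv⟩, rfl⟩
  rw [angleToSub, h, csInf_singleton]

lemma sin_le_lineAngle' {E : Type*} [NormedAddCommGroup E] [InnerProductSpace ℝ E]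
    (u v : E) : Real.sin (InnerProductGeometry.angle u v) ≤ lineAngle u v := by
  rcases le_total (InnerProductGeometry.angle u v) (InnerProductGeometry.angle u (-v)) with h | h
  · rw [lineAngle, min_eq_left h]
    exact Real.sin_le (InnerProductGeometry.angle_nonneg u v)
  · rw [lineAngle, min_eq_right h, InnerProductGeometry.angle_neg_right]
    calc Real.sin (InnerProductGeometry.angle u v)
        = Real.sin (Real.pi - InnerProductGeometry.angle u v) := (Real.sin_pi_sub _).symm
      _ ≤ Real.pi - InnerProductGeometry.angle u v := Real.sin_le (by
          have := InnerProductGeometry.angle_le_pi u v; linarith)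

lemma det_le_lineAngle' (u v : Euc 2) :
    |u 0 * v 1 - u 1 * v 0| ≤ lineAngle u v * (‖u‖ * ‖v‖) := by
  have hinner : ∀ a b : Euc 2, (inner ℝ a b : ℝ) = a 0 * b 0 + a 1 * b 1 := by
    intro a b; simp [PiLp.inner_apply, Fin.sum_univ_two, RCLike.inner_apply, mul_comm]
  have h := InnerProductGeometry.sin_angle_mul_norm_mul_norm u v
  rw [hinner, hinner, hinner] at h
  have h2 : (u 0 * u 0 + u 1 * u 1) * (v 0 * v 0 + v 1 * v 1) -
      (u 0 * v 0 + u 1 * v 1) * (u 0 * v 0 + u 1 * v 1) = (u 0 * v 1 - u 1 * v 0)^2 := by ring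
  rw [h2, Real.sqrt_sq_eq_abs] at h
  rw [← h]
  exact mul_le_mul_of_nonneg_right (sin_le_lineAngle' u v) (by positivity)

set_option maxHeartbeats 1000000 in
theorem restriction_differentiable (f : ℝ → ℝ) (hf : Continuous f) (S : Set (Euc 2))
    (hS : IsSmoothSurface 1 S) (x μ : ℝ) (hx : pt x (f x) ∈ S)
    (htan : IsTangentPlane 1 S (pt x (f x)) (Submodule.span ℝ {pt 1 μ})) :
    Filter.Tendsto (fun t => (f t - f x) / (t - x))
      (nhdsWithin x ({t : ℝ | pt t (f t) ∈ S} \ {x})) (nhds μ) := by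
  rw [Metric.tendsto_nhdsWithin_nhds]
  intro η hη
  set C := Real.sqrt (1 + μ^2) with hCdef
  have hC1 : 1 ≤ C := by
    rw [hCdef]
    calc (1:ℝ) = Real.sqrt 1 := by simp
      _ ≤ Real.sqrt (1 + μ^2) := Real.sqrt_le_sqrt (by nlinarith [sq_nonneg μ])
  have hC0 : (0:ℝ) < C := lt_of_lt_of_le one_pos hC1
  set ε := min (η / (4 * C * (1 + |μ|))) (1 / (2 * C)) with hεdef
  have hεpos : 0 < ε := lt_min (by positivity) (by positivity)
  obtain ⟨δ₀, hδ₀, htg⟩ := htan.2 ε hεpos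
  obtain ⟨δ₁, hδ₁, hc⟩ := Metric.continuousAt_iff.mp hf.continuousAt (δ₀/2) (by positivity)
  refine ⟨min δ₁ (δ₀/2), lt_min hδ₁ (by positivity), ?_⟩
  intro t ht hdist
  obtain ⟨htS, htx⟩ := ht
  have hta : t ≠ x := htx
  have ha : t - x ≠ 0 := sub_ne_zero.mpr hta
  have habs : 0 < |t - x| := abs_pos.mpr ha
  set u : Euc 2 := pt t (f t) - pt x (f x) with hudef
  have hu0 : u 0 = t - x := by simp [hudef, pt, PiLp.sub_apply]
  have hu1 : u 1 = f t - f x := by simp [hudef, pt, PiLp.sub_apply]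
  set v : Euc 2 := pt 1 μ with hvdef
  have hv0 : v 0 = 1 := by simp [hvdef, pt]
  have hv1 : v 1 = μ := by simp [hvdef, pt]
  have hv : v ≠ 0 := by
    intro h
    have := congrArg (fun w : Euc 2 => w 0) h
    rw [hv0] at this
    simpa using this
  have hnormu : ‖u‖ = Real.sqrt ((t - x)^2 + (f t - f x)^2) := by
    rw [EuclideanSpace.norm_eq]
    simp [Fin.sum_univ_two, Real.norm_eq_abs, sq_abs, hu0, hu1]
  have hnormv : ‖v‖ = C := by
    rw [EuclideanSpace.norm_eq]
    simp [Fin.sum_univ_two, Real.norm_eq_abs, sq_abs, hv0, hv1, hCdef]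
  have hnu : ‖u‖ ≤ |t - x| + |f t - f x| := by
    rw [hnormu]
    have h1 : (t - x)^2 + (f t - f x)^2 ≤ (|t - x| + |f t - f x|)^2 := by
      have := abs_nonneg (t - x); have := abs_nonneg (f t - f x)
      nlinarith [sq_abs (t - x), sq_abs (f t - f x)]
    calc Real.sqrt ((t - x)^2 + (f t - f x)^2) ≤ Real.sqrt ((|t - x| + |f t - f x|)^2) :=
          Real.sqrt_le_sqrt h1
      _ = |t - x| + |f t - f x| := Real.sqrt_sq (by positivity)
  have hupos : 0 < ‖u‖ := by
    rw [norm_pos_iff]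
    intro h
    have := congrArg (fun w : Euc 2 => w 0) h
    rw [hu0] at this
    exact ha (by simpa using this)
  have hdx : |t - x| < min δ₁ (δ₀/2) := by rwa [Real.dist_eq] at hdist
  have hfd : |f t - f x| < δ₀/2 := by
    have := hc (lt_of_lt_of_le hdist (min_le_left _ _))
    rwa [Real.dist_eq] at this
  have hlt : ‖u‖ < δ₀ := by
    have h2 : |t - x| < δ₀/2 := lt_of_lt_of_le hdx (min_le_right _ _)
    linarith
  have hang : lineAngle u v < ε := by
    have := htg (pt t (f t)) htS (by rwa [← hudef]) (by rwa [← hudef])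
    rwa [← hudef, angleToSub_span' u v hv] at this
  have hla0 : 0 ≤ lineAngle u v :=
    le_min (InnerProductGeometry.angle_nonneg u v) (InnerProductGeometry.angle_nonneg u (-v))
  have hkey : |(t - x) * μ - (f t - f x)| ≤ ε * (‖u‖ * C) := by
    have h := det_le_lineAngle' u v
    rw [hu0, hu1, hv0, hv1, hnormv, mul_one] at h
    calc |(t - x) * μ - (f t - f x)| ≤ lineAngle u v * (‖u‖ * C) := h
      _ ≤ ε * (‖u‖ * C) := mul_le_mul_of_nonneg_right hang.le (by positivity)
  set q := (f t - f x) / (t - x) with hqdef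
  set d := |q - μ| with hddef
  have hd0 : 0 ≤ d := abs_nonneg _
  have hb : f t - f x = q * (t - x) := (div_mul_cancel₀ _ ha).symm
  have heq : |(t - x) * μ - (f t - f x)| = |t - x| * d := by
    rw [hddef, hb, show (t - x) * μ - q * (t - x) = -((t - x) * (q - μ)) by ring, abs_neg, abs_mul]
  have hqb : |f t - f x| ≤ (|μ| + d) * |t - x| := by
    rw [hb, abs_mul]
    have : |q| ≤ |μ| + d := by
      have := abs_sub_abs_le_abs_sub q μ
      rw [← hddef] at this
      linarith
    exact mul_le_mul_of_nonneg_right this (abs_nonneg _)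
  have hstep : |t - x| * d ≤ |t - x| * (ε * C * (1 + |μ| + d)) := by
    rw [← heq]
    calc |(t - x) * μ - (f t - f x)| ≤ ε * (‖u‖ * C) := hkey
      _ ≤ ε * ((|t - x| + (|μ| + d) * |t - x|) * C) := by
          have h3 : ‖u‖ ≤ |t - x| + (|μ| + d) * |t - x| := le_trans hnu (by linarith)
          have := mul_le_mul_of_nonneg_right h3 hC0.le
          nlinarith
      _ = |t - x| * (ε * C * (1 + |μ| + d)) := by ring
  have hd_le : d ≤ ε * C * (1 + |μ| + d) := le_of_mul_le_mul_left hstep habs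
  have hεC : ε * C ≤ 1/2 := by
    have h4 : ε ≤ 1 / (2 * C) := min_le_right _ _
    calc ε * C ≤ (1 / (2 * C)) * C := mul_le_mul_of_nonneg_right h4 hC0.le
      _ = 1/2 := by field_simp
  have hεμ : ε * C * (1 + |μ|) ≤ η / 4 := by
    have h5 : ε ≤ η / (4 * C * (1 + |μ|)) := min_le_left _ _
    have h6 : (0:ℝ) < C * (1 + |μ|) := by positivity
    calc ε * C * (1 + |μ|) = ε * (C * (1 + |μ|)) := by ring
      _ ≤ (η / (4 * C * (1 + |μ|))) * (C * (1 + |μ|)) :=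
          mul_le_mul_of_nonneg_right h5 h6.le
      _ = η / 4 := by
          rw [show 4 * C * (1 + |μ|) = 4 * (C * (1 + |μ|)) by ring, ← div_div,
            div_mul_cancel₀ _ h6.ne']
  have hεCd : ε * C * d ≤ d / 2 := by
    have := mul_le_mul_of_nonneg_right hεC hd0
    linarith
  have hsplit : ε * C * (1 + |μ| + d) = ε * C * (1 + |μ|) + ε * C * d := by ring
  have : d < η := by linarith
  rwa [Real.dist_eq]


end
end

section
/- There exists a nonempty perfect (compact, no isolated points) set A ⊆ ℝ and an angle θ ∈ (0, π/4) such that for any two distinct points a, a' ∈ A × A, the line through a and a' does not make angle θ with the horizontal axis. -/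
open Set

noncomputable section

noncomputable def cf (a : ℕ → Bool) : ℝ :=
  ∑' i : ℕ, (if a i then ((1:ℝ)/10)^(i+1) else 0)

lemma term_abs_le (a : ℕ → Bool) (i : ℕ) :
    |(if a i then ((1:ℝ)/10)^(i+1) else 0)| ≤ ((1:ℝ)/10)^(i+1) := by
  split
  · rw [abs_of_nonneg (by positivity)]
  · rw [abs_zero]; positivity

lemma summable_pow : Summable (fun i : ℕ => ((1:ℝ)/10)^(i+1)) := by
  have h : Summable (fun i : ℕ => ((1:ℝ)/10)^i) :=
    summable_geometric_of_lt_one (by norm_num) (by norm_num)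
  have := h.mul_right ((1:ℝ)/10)
  apply this.congr
  intro i
  rw [pow_succ]

lemma summable_term (a : ℕ → Bool) :
    Summable (fun i : ℕ => (if a i then ((1:ℝ)/10)^(i+1) else 0)) := by
  apply Summable.of_norm
  apply Summable.of_nonneg_of_le (fun i => norm_nonneg _) _ summable_pow
  intro i
  simpa [Real.norm_eq_abs] using term_abs_le a i

lemma g_abs_le (a b : ℕ → Bool) (i : ℕ) :
    |(if a i then ((1:ℝ)/10)^(i+1) else 0) - (if b i then ((1:ℝ)/10)^(i+1) else 0)|
      ≤ ((1:ℝ)/10)^(i+1) := by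
  have h : (0:ℝ) ≤ ((1:ℝ)/10)^(i+1) := by positivity
  rcases Bool.eq_false_or_eq_true (a i) with h1 | h1 <;>
    rcases Bool.eq_false_or_eq_true (b i) with h2 | h2 <;>
    simp [h1, h2, abs_of_nonneg h, abs_of_nonpos (neg_nonpos.mpr h)] <;>
    rw [abs_of_nonneg (by positivity)]

lemma cf_diff_bound {a b : ℕ → Bool} (hab : a ≠ b) :
    ∃ k : ℕ, a k ≠ b k ∧
      (8/9) * ((1:ℝ)/10)^(k+1) ≤ |cf a - cf b| ∧
      |cf a - cf b| ≤ (10/9) * ((1:ℝ)/10)^(k+1) := by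
  set r : ℝ := 1/10 with hr
  set g : ℕ → ℝ := fun i =>
    (if a i then r^(i+1) else 0) - (if b i then r^(i+1) else 0) with hg
  have hgsum : Summable g := (summable_term a).sub (summable_term b)
  have hcf : cf a - cf b = ∑' i, g i := (Summable.tsum_sub (summable_term a) (summable_term b)).symm
  have hex : ∃ n, a n ≠ b n := Function.ne_iff.mp hab
  obtain ⟨k, hkne, hkmin⟩ : ∃ k, a k ≠ b k ∧ ∀ i < k, a i = b i :=
    ⟨Nat.find hex, Nat.find_spec hex, fun i hi => by
      by_contra h; exact Nat.find_min hex hi h⟩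
  have hsplit : (∑ i ∈ Finset.range (k+1), g i) + ∑' i, g (i + (k+1)) = ∑' i, g i :=
    Summable.sum_add_tsum_nat_add (k+1) hgsum
  have hhead : ∑ i ∈ Finset.range (k+1), g i = g k := by
    apply Finset.sum_eq_single_of_mem k (Finset.self_mem_range_succ k)
    intro i hi hik
    have hilt : i < k := by
      have := Finset.mem_range.mp hi; omega
    simp [hg, hkmin i hilt]
  have hrk : (0:ℝ) < r^(k+1) := by positivity
  have hgk : |g k| = r^(k+1) := by
    rcases Bool.eq_false_or_eq_true (a k) with h1 | h1 <;>
      rcases Bool.eq_false_or_eq_true (b k) with h2 | h2 <;>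
      simp [h1, h2] at hkne ⊢ <;>
      simp [hg, h1, h2, abs_of_nonneg hrk.le, abs_of_nonpos (neg_nonpos.mpr hrk.le)]
  have htailsum : Summable fun i => g (i + (k+1)) := (summable_nat_add_iff (k+1)).2 hgsum
  have habs : Summable fun i => ‖g (i + (k+1))‖ := by
    simpa [Real.norm_eq_abs] using htailsum.abs
  have hgeo : Summable fun i : ℕ => r^(i+(k+1)+1) := by
    have h := summable_pow.mul_right (r^(k+1))
    apply h.congr
    intro i
    rw [← pow_add]
    ring_nf
    rw [hr]; ring
  have htail : |(∑' i, g (i + (k+1)))| ≤ (1/9) * r^(k+1) := by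
    have h1 := norm_tsum_le_tsum_norm (f := fun i => g (i + (k+1))) habs
    rw [Real.norm_eq_abs] at h1
    have h2 : (∑' i, ‖g (i + (k+1))‖) ≤ ∑' i : ℕ, r^(i+(k+1)+1) := by
      apply Summable.tsum_le_tsum _ habs hgeo
      intro i
      have := g_abs_le a b (i + (k+1))
      rw [Real.norm_eq_abs, hg]
      exact this
    have h3 : (∑' i : ℕ, r^(i+(k+1)+1)) = (1/9) * r^(k+1) := by
      have he : (fun i : ℕ => r^(i+(k+1)+1)) = fun i : ℕ => r^i * r^(k+2) := by
        funext i; rw [← pow_add]; ring_nf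
      rw [he, tsum_mul_right, tsum_geometric_of_lt_one (by norm_num) (by norm_num), hr]
      ring_nf
    linarith
  refine ⟨k, hkne, ?_, ?_⟩
  · have h1 : |g k| - |(∑' i, g (i + (k+1)))| ≤ |g k + ∑' i, g (i + (k+1))| := by
      have h := abs_add_le (g k + ∑' i, g (i + (k+1))) (-(∑' i, g (i + (k+1))))
      simp only [add_neg_cancel_right, abs_neg] at h
      linarith
    rw [hcf, ← hsplit, hhead]
    calc (8/9) * r^(k+1) = r^(k+1) - (1/9) * r^(k+1) := by ring
      _ ≤ |g k| - |(∑' i, g (i + (k+1)))| := by rw [hgk]; linarith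
      _ ≤ _ := h1
  · rw [hcf, ← hsplit, hhead]
    calc |g k + ∑' i, g (i + (k+1))| ≤ |g k| + |(∑' i, g (i + (k+1)))| := abs_add_le _ _
      _ ≤ r^(k+1) + (1/9) * r^(k+1) := by rw [hgk]; linarith
      _ = (10/9) * r^(k+1) := by ring

lemma cf_continuous : Continuous cf := by
  refine continuous_tsum (f := fun i (a : ℕ → Bool) => if a i then ((1:ℝ)/10)^(i+1) else 0)
    (u := fun i : ℕ => ((1:ℝ)/10)^(i+1)) (fun i => ?_) summable_pow (fun i a => ?_)
  · exact ((continuous_of_discreteTopology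
      (f := fun b : Bool => if b then ((1:ℝ)/10)^(i+1) else 0)).comp (continuous_apply i))
  · simpa [Real.norm_eq_abs] using term_abs_le a i

lemma cf_compact : IsCompact (Set.range cf) := isCompact_range cf_continuous

lemma cf_perfect : Perfect (Set.range cf) := by
  constructor
  · exact cf_compact.isClosed
  · intro x hx
    rw [accPt_iff_nhds]
    intro U hU
    obtain ⟨a, rfl⟩ := hx
    obtain ⟨ε, hε, hball⟩ := Metric.mem_nhds_iff.mp hU
    obtain ⟨n, hn⟩ := exists_pow_lt_of_lt_one hε (by norm_num : (1:ℝ)/10 < 1)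
    set a' : ℕ → Bool := fun i => if i = n then !(a i) else a i with ha'
    have hne : a' ≠ a := by
      intro h
      have := congrFun h n
      simp [ha'] at this
    obtain ⟨k, hk, hlow, hup⟩ := cf_diff_bound hne
    have hkn : k = n := by
      by_contra h
      apply hk
      simp [ha', h]
    refine ⟨cf a', ⟨hball ?_, ⟨a', rfl⟩⟩, ?_⟩
    · rw [Metric.mem_ball, Real.dist_eq]
      calc |cf a' - cf a| ≤ (10/9) * ((1:ℝ)/10)^(k+1) := hup
        _ ≤ ((1:ℝ)/10)^n := by
            rw [hkn, pow_succ]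
            nlinarith [pow_pos (by norm_num : (0:ℝ) < 1/10) n]
        _ < ε := hn
    · intro h
      rw [h, sub_self, abs_zero] at hlow
      nlinarith [pow_pos (by norm_num : (0:ℝ) < 1/10) (k+1)]

lemma no_ratio {d1 d2 : ℝ} {k j : ℕ}
    (h1l : 8/9 * ((1:ℝ)/10)^(k+1) ≤ |d1|) (h1u : |d1| ≤ 10/9 * ((1:ℝ)/10)^(k+1))
    (h2l : 8/9 * ((1:ℝ)/10)^(j+1) ≤ |d2|) (h2u : |d2| ≤ 10/9 * ((1:ℝ)/10)^(j+1))
    (h : d1 = 3 * d2) : False := by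
  have h3 : |d1| = 3 * |d2| := by rw [h, abs_mul]; norm_num
  rcases le_or_gt j k with hjk | hkj
  · have hp : ((1:ℝ)/10)^(k+1) ≤ ((1:ℝ)/10)^(j+1) :=
      pow_le_pow_of_le_one (by norm_num) (by norm_num) (by omega)
    nlinarith [pow_pos (by norm_num : (0:ℝ) < 1/10) (k+1)]
  · have hp : ((1:ℝ)/10)^(j+1) ≤ ((1:ℝ)/10)^(k+2) :=
      pow_le_pow_of_le_one (by norm_num) (by norm_num) (by omega)
    have : ((1:ℝ)/10)^(k+2) = ((1:ℝ)/10)^(k+1) * (1/10) := by rw [pow_succ]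
    nlinarith [pow_pos (by norm_num : (0:ℝ) < 1/10) (k+1)]

theorem exists_perfect_no_theta_secant :
    ∃ (A : Set ℝ) (θ : ℝ), A.Nonempty ∧ IsCompact A ∧ Perfect A ∧
      θ ∈ Set.Ioo 0 (Real.pi / 4) ∧
      ∀ p ∈ A ×ˢ A, ∀ q ∈ A ×ˢ A, p ≠ q → q.2 - p.2 ≠ (q.1 - p.1) * Real.tan θ := by
  refine ⟨Set.range cf, Real.arctan (1/3), ⟨cf (fun _ => false), Set.mem_range_self _⟩,
    cf_compact, cf_perfect, ⟨?_, ?_⟩, ?_⟩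
  · rw [← Real.arctan_zero]
    exact Real.arctan_strictMono (by norm_num)
  · rw [show Real.pi / 4 = Real.arctan 1 by rw [Real.arctan_one]]
    exact Real.arctan_strictMono (by norm_num)
  · rintro ⟨x1, y1⟩ ⟨hx1, hy1⟩ ⟨x2, y2⟩ ⟨hx2, hy2⟩ hpq heq
    simp only [Real.tan_arctan] at heq
    by_cases hx : x2 = x1
    · apply hpq
      have : y2 - y1 = 0 := by rw [heq, hx]; ring
      have : y2 = y1 := by linarith
      simp [hx, this]
    · have hd1 : x2 - x1 ≠ 0 := sub_ne_zero.mpr hx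
      have hd2 : y2 - y1 ≠ 0 := by
        rw [heq]
        exact mul_ne_zero hd1 (by norm_num)
      obtain ⟨a, ha⟩ := hx2
      obtain ⟨b, hb⟩ := hx1
      obtain ⟨c, hc⟩ := hy2
      obtain ⟨d, hd⟩ := hy1
      replace ha : cf a = x2 := ha
      replace hb : cf b = x1 := hb
      replace hc : cf c = y2 := hc
      replace hd : cf d = y1 := hd
      have hab : a ≠ b := by rintro rfl; rw [ha] at hb; exact hd1 (by rw [hb]; ring)
      have hcd : c ≠ d := by rintro rfl; rw [hc] at hd; exact hd2 (by rw [hd]; ring)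
      obtain ⟨k, _, h1l, h1u⟩ := cf_diff_bound hab
      obtain ⟨j, _, h2l, h2u⟩ := cf_diff_bound hcd
      rw [ha, hb] at h1l h1u
      rw [hc, hd] at h2l h2u
      exact no_ratio h1l h1u h2l h2u (by rw [heq]; ring)


end
end
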